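/- For all integers n ≥ 0 and k ≥ 1: C(n+k, k)_F = Σ ((t_1+⋯+t_k)! / (t_1! ⋯ t_k!)) · (−1)^{k + Σ_{j=1}^{k} ((j+1)(j−2)/2) t_j} · ∏_{j=1}^{k} (C(n+1, j)_F)^{t_j}, where the sum ranges over all tuples (t_1, …, t_k) of nonnegative integers satisfying t_1 + 2t_2 + ⋯ + k t_k = k (note each (j+1)(j−2) is even, so the sign exponent is an integer). -/

import Mathlib

open Finset Real goldenRatio Polynomial

/-- The Fibonomial coefficient `C(n,k)_F = ∏_{r=1}^{k} F_{n-r+1}/F_r`, as a real number.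
It equals `0` when `k > n` and `1` when `k = 0`. -/
noncomputable def fibonomial (n k : ℕ) : ℝ :=
  ∏ r ∈ Finset.range k, (Nat.fib (n - r) : ℝ) / (Nat.fib (r + 1) : ℝ)


noncomputable def qq : ℝ := ψ / φ

lemma abs_qq_lt_one : |qq| < 1 := by
  rw [qq, abs_div]
  rw [div_lt_one (by rw [abs_of_pos goldenRatio_pos]; exact goldenRatio_pos)]
  rw [abs_of_pos goldenRatio_pos, abs_of_neg goldenConj_neg]
  nlinarith [neg_one_lt_goldenConj, one_lt_goldenRatio]

lemma qq_pow_ne_one (j : ℕ) : qq ^ (j + 1) ≠ 1 := by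
  intro h
  have : |qq ^ (j+1)| < 1 := by
    rw [abs_pow]
    exact pow_lt_one₀ (abs_nonneg _) abs_qq_lt_one (Nat.succ_ne_zero j)
  rw [h] at this; norm_num at this

lemma one_sub_qq_pow_ne_zero (j : ℕ) : 1 - qq ^ (j + 1) ≠ 0 := by
  intro h
  exact qq_pow_ne_one j (by linarith [sub_eq_zero.mp h])

/-- Gaussian binomial coefficient with `q = qq`, as a real number. -/
noncomputable def gb (a b : ℕ) : ℝ :=
  ∏ r ∈ Finset.range b, (1 - qq ^ (a - r)) / (1 - qq ^ (r + 1))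

lemma gb_zero (a : ℕ) : gb a 0 = 1 := by simp [gb]

lemma gb_eq_zero {a b : ℕ} (h : a < b) : gb a b = 0 := by
  apply Finset.prod_eq_zero (Finset.mem_range.2 h)
  simp

lemma den_ne_zero (b : ℕ) : (∏ r ∈ Finset.range b, (1 - qq ^ (r + 1))) ≠ 0 :=
  Finset.prod_ne_zero_iff.2 fun r _ => one_sub_qq_pow_ne_zero r

lemma gb_eq_div (a b : ℕ) :
    gb a b = (∏ r ∈ Finset.range b, (1 - qq ^ (a - r))) /
      (∏ r ∈ Finset.range b, (1 - qq ^ (r + 1))) := by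
  rw [gb, Finset.prod_div_distrib]

lemma gb_pascal (a b : ℕ) :
    gb (a + 1) (b + 1) = gb a (b + 1) + qq ^ (a - b) * gb a b := by
  rcases lt_or_ge a b with h | h
  · rw [gb_eq_zero (by omega), gb_eq_zero (by omega), gb_eq_zero h]; ring
  · have hnum1 : (∏ r ∈ Finset.range (b+1), (1 - qq ^ (a + 1 - r)))
        = (∏ r ∈ Finset.range b, (1 - qq ^ (a - r))) * (1 - qq ^ (a + 1)) := by
      rw [Finset.prod_range_succ', Nat.sub_zero]
      congr 1
      exact Finset.prod_congr rfl fun r _ => by congr 2; omega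
    have hnum2 : (∏ r ∈ Finset.range (b+1), (1 - qq ^ (a - r)))
        = (∏ r ∈ Finset.range b, (1 - qq ^ (a - r))) * (1 - qq ^ (a - b)) :=
      Finset.prod_range_succ _ _
    have hden : (∏ r ∈ Finset.range (b+1), (1 - qq ^ (r + 1)))
        = (∏ r ∈ Finset.range b, (1 - qq ^ (r + 1))) * (1 - qq ^ (b + 1)) :=
      Finset.prod_range_succ _ _
    have key : 1 - qq ^ (a + 1) = (1 - qq ^ (a - b)) + qq ^ (a - b) * (1 - qq ^ (b + 1)) := by
      have : qq ^ (a - b) * qq ^ (b + 1) = qq ^ (a + 1) := by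
        rw [← pow_add]; congr 1; omega
      rw [← this]; ring
    rw [gb_eq_div, gb_eq_div, gb_eq_div, hnum1, hnum2, hden, key]
    have hD := den_ne_zero b
    have hZ : (1 : ℝ) - qq ^ (b + 1) ≠ 0 := one_sub_qq_pow_ne_zero b
    field_simp

lemma gb_diag (a : ℕ) : gb a a = 1 := by
  induction a with
  | zero => simp [gb]
  | succ a ih => rw [gb_pascal, gb_eq_zero (by omega), ih]; simp

/-- signed elementary symmetric function `e'_m` of `1, q, …, q^n`. -/
noncomputable def ee (n m : ℕ) : ℝ := (-1) ^ m * qq ^ (m.choose 2) * gb (n + 1) m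

/-- complete homogeneous symmetric function `h_j` of `1, q, …, q^n`. -/
noncomputable def hh (n j : ℕ) : ℝ := gb (n + j) j

lemma ee_zero (n : ℕ) : ee n 0 = 1 := by simp [ee, gb_zero]

lemma hh_zero (n : ℕ) : hh n 0 = 1 := by simp [hh, gb_zero]

lemma hh_rec (n j : ℕ) : hh (n + 1) (j + 1) = hh n (j + 1) + qq ^ (n + 1) * hh (n + 1) j := by
  have h := gb_pascal (n + j + 1) j
  have e1 : n + 1 + (j + 1) = n + j + 1 + 1 := by omega
  have e2 : n + (j + 1) = n + j + 1 := by omega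
  have e3 : n + j + 1 - j = n + 1 := by omega
  rw [hh, hh, hh, e1, e2, h, e3, show n + 1 + j = n + j + 1 from by omega]

lemma ee_rec (n m : ℕ) : ee (n + 1) (m + 1) = ee n (m + 1) - qq ^ (n + 1) * ee n m := by
  rcases le_or_gt m (n + 1) with h | h
  · have hp := gb_pascal (n + 1) m
    rw [ee, ee, ee, hp]
    have hch : (m + 1).choose 2 = m.choose 2 + m := by
      simp [Nat.choose]; omega
    have hqe : qq ^ ((m+1).choose 2) * qq ^ (n + 1 - m) = qq ^ (n + 1) * qq ^ (m.choose 2) := by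
      rw [← pow_add, ← pow_add]; congr 1; omega
    linear_combination (-((-1:ℝ) ^ m * gb (n + 1) m)) * hqe
  · rw [ee, ee, ee, gb_eq_zero (by omega : n + 1 + 1 < m + 1),
      gb_eq_zero (by omega : n + 1 < m + 1), gb_eq_zero (by omega : n + 1 < m)]
    ring

noncomputable def TT (n k : ℕ) : ℝ := ∑ m ∈ Finset.range (k + 1), ee n m * hh n (k - m)

lemma TT_zero (n : ℕ) : TT n 0 = 1 := by simp [TT, ee_zero, hh_zero]

lemma TT_eq_zero (n : ℕ) : ∀ k, 1 ≤ k → TT n k = 0 := by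
  induction n with
  | zero =>
    intro k hk
    obtain ⟨l, rfl⟩ : ∃ l, k = l + 1 := ⟨k - 1, by omega⟩
    have hgb1 : gb 1 1 = 1 := gb_diag 1
    have hh0 : ∀ j, hh 0 j = 1 := fun j => by rw [hh, Nat.zero_add]; exact gb_diag j
    have : TT 0 (l+1) = ∑ m ∈ Finset.range (l + 2), ee 0 m := by
      rw [TT]; exact Finset.sum_congr rfl fun m _ => by rw [hh0, mul_one]
    rw [this, Finset.sum_range_succ', Finset.sum_range_succ']
    have h2 : ∀ i : ℕ, ee 0 (i + 1 + 1) = 0 := by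
      intro i; rw [ee, gb_eq_zero (by omega)]; ring
    rw [Finset.sum_congr rfl fun i _ => h2 i]
    simp [ee_zero, ee, hgb1, gb_zero]
  | succ n ih =>
    intro k hk
    -- first, a recurrence for TT (n+1)
    have key : ∀ l : ℕ, TT (n+1) (l+1)
        = TT n (l+1) - qq ^ (n+1) * TT n l + qq ^ (n+1) * TT (n+1) l := by
      intro l
      have step1 : TT (n+1) (l+1)
          = (∑ m ∈ Finset.range (l+2), ee (n+1) m * hh n (l+1-m)) + qq^(n+1) * TT (n+1) l := by
        rw [TT, Finset.sum_range_succ, Finset.sum_range_succ (n := l+1)]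
        have hsplit : ∀ m ∈ Finset.range (l+1),
            ee (n+1) m * hh (n+1) (l+1-m)
              = ee (n+1) m * hh n (l+1-m) + qq^(n+1) * (ee (n+1) m * hh (n+1) (l-m)) := by
          intro m hm
          rw [Finset.mem_range] at hm
          have : l + 1 - m = (l - m) + 1 := by omega
          rw [this, hh_rec]; ring
        rw [Finset.sum_congr rfl hsplit, Finset.sum_add_distrib, ← Finset.mul_sum]
        have : l + 1 - (l+1) = 0 := by omega
        rw [this, hh_zero, hh_zero, TT]
        ring
      have step2 : (∑ m ∈ Finset.range (l+2), ee (n+1) m * hh n (l+1-m))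
          = TT n (l+1) - qq^(n+1) * TT n l := by
        rw [Finset.sum_range_succ']
        have hsplit : ∀ m ∈ Finset.range (l+1),
            ee (n+1) (m+1) * hh n (l+1-(m+1))
              = ee n (m+1) * hh n (l - m) - qq^(n+1) * (ee n m * hh n (l-m)) := by
          intro m hm
          have : l + 1 - (m+1) = l - m := by omega
          rw [this, ee_rec]; ring
        rw [Finset.sum_congr rfl hsplit, Finset.sum_sub_distrib, ← Finset.mul_sum]
        have hT1 : TT n (l+1) = (∑ m ∈ Finset.range (l+1), ee n (m+1) * hh n (l-m))
            + ee n 0 * hh n (l+1) := by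
          rw [TT, Finset.sum_range_succ']
          congr 1
          apply Finset.sum_congr rfl
          intro m hm
          congr 2
          omega
        rw [hT1, TT]
        simp only [ee_zero, Nat.sub_zero]
        ring
      rw [step1, step2]
    obtain ⟨l, rfl⟩ : ∃ l, k = l + 1 := ⟨k - 1, by omega⟩
    clear hk
    induction l with
    | zero => rw [key 0, TT_zero, TT_zero, ih 1 le_rfl]; ring
    | succ l ihl =>
      rw [key (l+1), ih (l+2) (by omega), ih (l+1) (by omega), ihl]
      ring

lemma fibonomial_eq_zero {n k : ℕ} (h : n < k) : fibonomial n k = 0 := by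
  apply Finset.prod_eq_zero (Finset.mem_range.2 h)
  simp

lemma choose_succ_two (m : ℕ) : (m + 1).choose 2 = m.choose 2 + m := by
  simp [Nat.choose]; omega

lemma two_mul_choose_two (m : ℕ) : 2 * m.choose 2 = m * (m - 1) := by
  have h2 : 2 ∣ m * (m - 1) := by
    cases m with
    | zero => simp
    | succ i => rw [Nat.succ_sub_one, Nat.mul_comm]; exact (Nat.even_mul_succ_self i).two_dvd
  rw [Nat.choose_two_right, Nat.mul_div_cancel' h2]

lemma two_mul_choose_two_int (m : ℕ) : 2 * (m.choose 2 : ℤ) = (m : ℤ) * ((m : ℤ) - 1) := by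
  cases m with
  | zero => simp
  | succ i =>
    have h : 2 * ((i+1).choose 2) = (i+1) * i := by rw [two_mul_choose_two, Nat.succ_sub_one]
    have h2 : (2 * ((i+1).choose 2) : ℤ) = ((i+1) * i : ℕ) := by exact_mod_cast h
    push_cast at h2 ⊢
    linear_combination h2

lemma prod_zpow {ι : Type*} (s : Finset ι) (x : ℝ) (hx : x ≠ 0) (f : ι → ℤ) :
    ∏ i ∈ s, x ^ f i = x ^ (∑ i ∈ s, f i) := by
  classical
  induction s using Finset.cons_induction with
  | empty => simp
  | cons a s ha ih => rw [Finset.prod_cons, Finset.sum_cons, ih, ← zpow_add₀ hx]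

lemma sum_lin (M : ℕ) (a : ℤ) :
    ∑ r ∈ Finset.range M, (a - 1 - 2 * (r : ℤ)) = M * (a - 1) - M * (M - 1) := by
  induction M with
  | zero => simp
  | succ i ih => rw [Finset.sum_range_succ, ih]; push_cast; ring

lemma fibφ (m : ℕ) : (Nat.fib m : ℝ) = φ ^ m * (1 - qq ^ m) / √5 := by
  have hφ : (φ : ℝ) ^ m ≠ 0 := pow_ne_zero m goldenRatio_ne_zero
  rw [Real.coe_fib_eq, qq, div_pow ψ φ m]
  congr 1
  rw [mul_sub, mul_one, ← mul_div_assoc, mul_comm ((φ:ℝ)^m) (ψ^m), mul_div_assoc,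
    div_self hφ, mul_one]

lemma sqrt5_ne_zero : (√5 : ℝ) ≠ 0 := by positivity

lemma fib_as (n k : ℕ) :
    fibonomial n k = (∏ r ∈ Finset.range k, φ ^ (n - r) / φ ^ (r + 1)) * gb n k := by
  rw [fibonomial, gb, ← Finset.prod_mul_distrib]
  apply Finset.prod_congr rfl
  intro r _
  rw [fibφ, fibφ, div_div_div_comm, div_self sqrt5_ne_zero, div_one, mul_div_mul_comm]

lemma phi_prod (a b : ℕ) (hba : b ≤ a) :
    (∏ r ∈ Finset.range b, φ ^ (a - r) / φ ^ (r + 1))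
      = φ ^ (∑ r ∈ Finset.range b, ((a : ℤ) - 1 - 2 * (r : ℤ))) := by
  rw [← prod_zpow _ _ goldenRatio_ne_zero]
  apply Finset.prod_congr rfl
  intro r hr
  rw [Finset.mem_range] at hr
  rw [← zpow_natCast φ (a - r), ← zpow_natCast φ (r + 1), ← zpow_sub₀ goldenRatio_ne_zero]
  congr 1
  omega

lemma qq_pow_eq (C : ℕ) : qq ^ C = (-1 : ℝ) ^ C * φ ^ (-(2 * (C : ℤ))) := by
  have hψ : ψ = -φ⁻¹ := by rw [inv_goldenRatio]; ring
  have h1 : qq = -(φ ^ (-2 : ℤ)) := by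
    rw [qq, hψ, show (-2 : ℤ) = -2 from rfl, zpow_neg, zpow_two]
    rw [neg_div, div_eq_mul_inv, mul_inv]
  rw [h1, neg_pow, ← zpow_natCast (φ ^ (-2 : ℤ)) C, ← zpow_mul,
    show (-2 : ℤ) * (C : ℤ) = -(2 * (C : ℤ)) from by ring]

lemma fib_rec (n k : ℕ) (hk : 1 ≤ k) :
    ∑ m ∈ Finset.range (k + 1), (-1 : ℝ) ^ ((m + 1).choose 2) *
      (fibonomial (n + 1) m * fibonomial (n + (k - m)) (k - m)) = 0 := by
  have key : ∀ m ∈ Finset.range (k + 1),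
      (-1 : ℝ) ^ ((m + 1).choose 2) *
        (fibonomial (n + 1) m * fibonomial (n + (k - m)) (k - m))
      = φ ^ ((k : ℤ) * (n : ℤ)) * (ee n m * hh n (k - m)) := by
    intro m hm
    rw [Finset.mem_range] at hm
    have hmk : m ≤ k := by omega
    rcases le_or_gt m (n + 1) with hmn | hmn
    · rw [fib_as (n + 1) m, fib_as (n + (k - m)) (k - m), ee, hh,
        phi_prod (n + 1) m (by omega), phi_prod (n + (k - m)) (k - m) (by omega),
        sum_lin, sum_lin, qq_pow_eq, choose_succ_two, pow_add]
      have hzz : φ ^ ((m : ℤ) * ((((n : ℕ) + 1 : ℕ) : ℤ) - 1) - (m : ℤ) * ((m : ℤ) - 1))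
            * φ ^ (((k - m : ℕ) : ℤ) * ((((n + (k - m) : ℕ)) : ℤ) - 1)
                - ((k - m : ℕ) : ℤ) * (((k - m : ℕ) : ℤ) - 1))
          = φ ^ ((k : ℤ) * (n : ℤ)) * φ ^ (-(2 * (m.choose 2 : ℤ))) := by
        rw [← zpow_add₀ goldenRatio_ne_zero, ← zpow_add₀ goldenRatio_ne_zero]
        congr 1
        have hC := two_mul_choose_two_int m
        have hj : ((k - m : ℕ) : ℤ) = (k : ℤ) - (m : ℤ) := by omega
        push_cast [hj]
        linear_combination hC
      linear_combination
        ((-1 : ℝ) ^ (m.choose 2) * (-1) ^ m * gb (n + 1) m * gb (n + (k - m)) (k - m)) * hzz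
    · rw [fibonomial_eq_zero (by omega : n + 1 < m), ee, gb_eq_zero (by omega : n + 1 < m)]
      ring
  rw [Finset.sum_congr rfl key, ← Finset.mul_sum,
    show (∑ m ∈ Finset.range (k + 1), ee n m * hh n (k - m)) = TT n k from rfl,
    TT_eq_zero n k hk, mul_zero]


-- PART 3: general Trudi-type expansion
lemma trudi (c : ℕ → ℝ) (h : ℕ → ℝ) (h0 : h 0 = 1)
    (hrec : ∀ j, 1 ≤ j → h j = ∑ m ∈ Finset.range j, c (m + 1) * h (j - (m + 1)))
    (k : ℕ) :
    h k = ∑ t ∈ Finset.univ.filter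
        (fun t : Fin k → Fin (k + 1) => ∑ j : Fin k, ((j : ℕ) + 1) * ((t j : ℕ)) = k),
      (Nat.multinomial Finset.univ (fun j => (t j : ℕ)) : ℝ) *
        ∏ j : Fin k, (c ((j : ℕ) + 1)) ^ (t j : ℕ) := by
  classical
  set Q : Polynomial ℝ := ∑ j : Fin k, Polynomial.C (c ((j : ℕ) + 1)) * Polynomial.X ^ ((j : ℕ) + 1)
    with hQdef
  have hQ0 : Q.coeff 0 = 0 := by
    rw [hQdef, finset_sum_coeff]
    apply Finset.sum_eq_zero
    intro j _
    simp [coeff_C_mul, coeff_X_pow]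
  have hQm : ∀ m : ℕ, 1 ≤ m → m ≤ k → Q.coeff m = c m := by
    intro m h1 h2
    rw [hQdef, finset_sum_coeff]
    rw [Finset.sum_eq_single (⟨m - 1, by omega⟩ : Fin k)]
    · rw [coeff_C_mul, coeff_X_pow, if_pos (by simp; omega)]
      rw [mul_one]
      congr 1
      simp
      omega
    · intro b _ hb
      rw [coeff_C_mul, coeff_X_pow, if_neg, mul_zero]
      intro hc
      apply hb
      apply Fin.ext
      simp
      omega
    · intro habs
      exact absurd (Finset.mem_univ _) habs
  have hlow : ∀ s i : ℕ, i < s → (Q ^ s).coeff i = 0 := by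
    intro s
    induction s with
    | zero => intro i hi; omega
    | succ s ih =>
      intro i hi
      rw [pow_succ, coeff_mul]
      apply Finset.sum_eq_zero
      rintro ⟨p, r⟩ hpr
      rw [Finset.HasAntidiagonal.mem_antidiagonal] at hpr
      dsimp only
      rcases Nat.eq_zero_or_pos r with h0 | hpos
      · subst h0
        rw [hQ0, mul_zero]
      · rw [ih p (by omega), zero_mul]
  set R : Polynomial ℝ := ∑ s ∈ Finset.range (k + 1), Q ^ s with hRdef
  have hR0 : R.coeff 0 = 1 := by
    rw [hRdef, finset_sum_coeff]
    rw [Finset.sum_eq_single 0]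
    · simp
    · intro s _ hs
      exact hlow s 0 (by omega)
    · intro habs
      exact absurd (Finset.mem_range.2 (by omega)) habs
  have hRrec : ∀ j, 1 ≤ j → j ≤ k → R.coeff j
      = ∑ m ∈ Finset.range j, c (m + 1) * R.coeff (j - (m + 1)) := by
    intro j h1 h2
    have hgeom : R = Q * (∑ s ∈ Finset.range k, Q ^ s) + 1 := by rw [hRdef, geom_sum_succ]
    have hS : ∀ i : ℕ, i < k → (∑ s ∈ Finset.range k, Q ^ s).coeff i = R.coeff i := by
      intro i hi
      rw [hRdef, Finset.sum_range_succ, coeff_add, hlow k i hi, add_zero]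
    conv_lhs => rw [hgeom]
    rw [coeff_add, Polynomial.coeff_one, if_neg (by omega), add_zero, coeff_mul,
      Finset.Nat.sum_antidiagonal_eq_sum_range_succ_mk, Finset.sum_range_succ']
    dsimp only
    rw [hQ0, zero_mul, add_zero]
    apply Finset.sum_congr rfl
    intro m hm
    rw [Finset.mem_range] at hm
    rw [hQm (m + 1) (by omega) (by omega), hS (j - (m + 1)) (by omega)]
  have hcoeff : ∀ j, j ≤ k → h j = R.coeff j := by
    intro j
    induction j using Nat.strong_induction_on with
    | _ j ih =>
      intro hjk
      rcases Nat.eq_zero_or_pos j with h0' | hpos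
      · subst h0'; rw [h0, hR0]
      · rw [hrec j hpos, hRrec j hpos hjk]
        apply Finset.sum_congr rfl
        intro m hm
        rw [Finset.mem_range] at hm
        rw [ih (j - (m + 1)) (by omega) (by omega)]
  -- now expand R.coeff k via the multinomial theorem
  have hpow : ∀ s : ℕ, (Q ^ s).coeff k
      = ∑ t ∈ Finset.piAntidiag (Finset.univ : Finset (Fin k)) s,
          (if (∑ j : Fin k, ((j : ℕ) + 1) * t j) = k then
            (Nat.multinomial Finset.univ t : ℝ) * ∏ j : Fin k, (c ((j : ℕ) + 1)) ^ t j
          else 0) := by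
    intro s
    rw [hQdef, Finset.sum_pow_eq_sum_piAntidiag, finset_sum_coeff]
    apply Finset.sum_congr rfl
    intro t _
    have hterm : ∀ j : Fin k,
        (Polynomial.C (c ((j : ℕ) + 1)) * Polynomial.X ^ ((j : ℕ) + 1)) ^ t j
          = Polynomial.C ((c ((j : ℕ) + 1)) ^ t j) * Polynomial.X ^ (((j : ℕ) + 1) * t j) := by
      intro j
      rw [mul_pow, ← Polynomial.C_pow, ← pow_mul]
    rw [Finset.prod_congr rfl (fun j _ => hterm j), Finset.prod_mul_distrib,
      ← map_prod (Polynomial.C : ℝ →+* Polynomial ℝ)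
        (fun j : Fin k => (c ((j : ℕ) + 1)) ^ t j) Finset.univ,
      Finset.prod_pow_eq_pow_sum]
    rw [← Polynomial.C_eq_natCast, ← mul_assoc, ← Polynomial.C_mul, coeff_C_mul, coeff_X_pow,
      mul_ite, mul_one, mul_zero]
    simp [eq_comm]
  have hfinal : R.coeff k = ∑ t ∈ Finset.univ.filter
      (fun t : Fin k → Fin (k + 1) => ∑ j : Fin k, ((j : ℕ) + 1) * ((t j : ℕ)) = k),
      (Nat.multinomial Finset.univ (fun j => (t j : ℕ)) : ℝ) *
        ∏ j : Fin k, (c ((j : ℕ) + 1)) ^ (t j : ℕ) := by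
    rw [hRdef, finset_sum_coeff]
    rw [Finset.sum_congr rfl (fun s _ => hpow s)]
    -- inner bijection: for each s ≤ k, reindex ℕ-valued tuples by Fin (k+1)-valued ones
    have hinner : ∀ s ∈ Finset.range (k + 1),
        (∑ t ∈ Finset.piAntidiag (Finset.univ : Finset (Fin k)) s,
          (if (∑ j : Fin k, ((j : ℕ) + 1) * t j) = k then
            (Nat.multinomial Finset.univ t : ℝ) * ∏ j : Fin k, (c ((j : ℕ) + 1)) ^ t j
          else 0))
        = ∑ g ∈ Finset.univ.filter (fun g : Fin k → Fin (k + 1) =>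
            (∑ j : Fin k, (g j : ℕ)) = s),
          (if (∑ j : Fin k, ((j : ℕ) + 1) * (g j : ℕ)) = k then
            (Nat.multinomial Finset.univ (fun j => (g j : ℕ)) : ℝ) *
              ∏ j : Fin k, (c ((j : ℕ) + 1)) ^ (g j : ℕ)
          else 0) := by
      intro s hs
      rw [Finset.mem_range] at hs
      apply Finset.sum_bij'
        (i := fun t ht => fun j => (⟨t j, by
          have hts := (Finset.mem_piAntidiag.mp ht).1
          have h1 := Finset.single_le_sum (f := t) (fun i _ => Nat.zero_le _)
            (Finset.mem_univ j)
          have h2 : (∑ x : Fin k, t x) = Finset.sum Finset.univ t := rfl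
          omega⟩ : Fin (k + 1)))
        (j := fun g hg => fun j => (g j : ℕ))
      case hi =>
        intro t ht
        rw [Finset.mem_filter]
        exact ⟨Finset.mem_univ _, (Finset.mem_piAntidiag.mp ht).1⟩
      case hj =>
        intro g hg
        rw [Finset.mem_piAntidiag]
        exact ⟨(Finset.mem_filter.mp hg).2, fun i _ => Finset.mem_univ i⟩
      case left_neg => intro t ht; rfl
      case right_neg =>
        intro g hg
        funext j
        apply Fin.ext
        rfl
      case h => intro t ht; rfl
    rw [Finset.sum_congr rfl hinner]
    -- collapse the double sum
    rw [Finset.sum_congr rfl (fun s _ => Finset.sum_filter _ _)]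
    rw [Finset.sum_comm]
    have hcollapse : ∀ g : Fin k → Fin (k + 1),
        (∑ s ∈ Finset.range (k + 1), if (∑ j : Fin k, (g j : ℕ)) = s then
          (if (∑ j : Fin k, ((j : ℕ) + 1) * (g j : ℕ)) = k then
            (Nat.multinomial Finset.univ (fun j => (g j : ℕ)) : ℝ) *
              ∏ j : Fin k, (c ((j : ℕ) + 1)) ^ (g j : ℕ)
          else 0) else 0)
        = (if (∑ j : Fin k, ((j : ℕ) + 1) * (g j : ℕ)) = k then
            (Nat.multinomial Finset.univ (fun j => (g j : ℕ)) : ℝ) *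
              ∏ j : Fin k, (c ((j : ℕ) + 1)) ^ (g j : ℕ)
          else 0) := by
      intro g
      rcases eq_or_ne (∑ j : Fin k, ((j : ℕ) + 1) * (g j : ℕ)) k with hw | hw
      · have hle : (∑ j : Fin k, (g j : ℕ)) ∈ Finset.range (k + 1) := by
          rw [Finset.mem_range]
          have : (∑ j : Fin k, (g j : ℕ)) ≤ ∑ j : Fin k, ((j : ℕ) + 1) * (g j : ℕ) :=
            Finset.sum_le_sum (fun j _ => Nat.le_mul_of_pos_left _ (by omega))
          omega
        rw [Finset.sum_ite_eq (Finset.range (k + 1)), if_pos hle]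
      · simp [hw]
    rw [Finset.sum_congr rfl (fun g _ => hcollapse g)]
    rw [← Finset.sum_filter]
  rw [hcoeff k le_rfl, hfinal]

/- The sum ranges over all tuples `(t_1, …, t_k)` of nonnegative integers with
`t_1 + 2 t_2 + ⋯ + k t_k = k`; such tuples necessarily have each `t_j ≤ k`,
so they are faithfully encoded as functions `Fin k → Fin (k+1)`.
The sign exponent `k + Σ_j ((j+1)(j−2)/2) t_j` is an integer (each `(j+1)(j−2)` is even),
and is used as a `ℤ`-exponent of `(−1 : ℝ)`; here `j` runs over `1, …, k`, encoded by
`(j : Fin k)` with value `(j : ℕ) + 1`. -/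
theorem fibonomial_trudi_column (n k : ℕ) (hk : 1 ≤ k) :
    fibonomial (n + k) k =
      ∑ t ∈ Finset.univ.filter
          (fun t : Fin k → Fin (k + 1) => ∑ j : Fin k, ((j : ℕ) + 1) * ((t j : ℕ)) = k),
        (((∑ j : Fin k, (t j : ℕ)).factorial : ℝ) / ∏ j : Fin k, ((t j : ℕ).factorial : ℝ)) *
          (-1 : ℝ) ^ ((k : ℤ) +
            ∑ j : Fin k, ((((j : ℕ) : ℤ) + 2) * (((j : ℕ) : ℤ) - 1) / 2) * ((t j : ℕ) : ℤ)) *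
          ∏ j : Fin k, (fibonomial (n + 1) ((j : ℕ) + 1)) ^ (t j : ℕ) := by
  classical
  set c : ℕ → ℝ := fun m => (-1 : ℝ) ^ ((m + 1).choose 2 + 1) * fibonomial (n + 1) m with hc
  set h : ℕ → ℝ := fun j => fibonomial (n + j) j with hhdef
  have h0 : h 0 = 1 := by simp [hhdef, fibonomial]
  have hrec : ∀ j, 1 ≤ j → h j = ∑ m ∈ Finset.range j, c (m + 1) * h (j - (m + 1)) := by
    intro j hj
    have hfr := fib_rec n j hj
    rw [Finset.sum_range_succ'] at hfr
    have e0 : (-1 : ℝ) ^ ((0 + 1).choose 2) *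
        (fibonomial (n + 1) 0 * fibonomial (n + (j - 0)) (j - 0)) = h j := by
      norm_num [fibonomial, hhdef]
    rw [e0] at hfr
    have hsum : ∑ m ∈ Finset.range j, c (m + 1) * h (j - (m + 1))
        = -(∑ m ∈ Finset.range j, (-1 : ℝ) ^ ((m + 1 + 1).choose 2) *
            (fibonomial (n + 1) (m + 1) * fibonomial (n + (j - (m + 1))) (j - (m + 1)))) := by
      rw [← Finset.sum_neg_distrib]
      apply Finset.sum_congr rfl
      intro m _
      rw [hc, hhdef]
      dsimp only
      rw [pow_succ]
      ring
    rw [hsum]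
    linarith [hfr]
  have main := trudi c h h0 hrec k
  rw [hhdef] at main
  dsimp only at main
  rw [main]
  apply Finset.sum_congr rfl
  intro t ht
  rw [Finset.mem_filter] at ht
  have ht2 := ht.2
  -- (a) multinomial as factorial quotient
  have ha : (Nat.multinomial Finset.univ (fun j => (t j : ℕ)) : ℝ)
      = ((∑ j : Fin k, (t j : ℕ)).factorial : ℝ) / ∏ j : Fin k, ((t j : ℕ).factorial : ℝ) := by
    have hne : (∏ j : Fin k, ((t j : ℕ).factorial : ℝ)) ≠ 0 := by
      apply Finset.prod_ne_zero_iff.2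
      intro j _
      exact_mod_cast (Nat.factorial_pos _).ne'
    rw [eq_div_iff hne]
    have hspec := Nat.multinomial_spec Finset.univ (fun j => (t j : ℕ))
    rw [mul_comm]
    exact_mod_cast congrArg (Nat.cast : ℕ → ℝ) hspec
  -- (c) the sign identity
  have hej : ∀ j : Fin k, (((j : ℕ) : ℤ) + 2) * (((j : ℕ) : ℤ) - 1) / 2
      = ((((j : ℕ) + 2).choose 2 : ℕ) : ℤ) - ((j : ℕ) : ℤ) - 2 := by
    intro j
    have h2 := two_mul_choose_two_int ((j : ℕ) + 2)
    push_cast at h2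
    have h3 : (((j : ℕ) : ℤ) + 2) * (((j : ℕ) : ℤ) - 1)
        = 2 * (((((j : ℕ) + 2).choose 2 : ℕ) : ℤ) - ((j : ℕ) : ℤ) - 2) := by
      push_cast
      linear_combination -h2
    rw [h3, Int.mul_ediv_cancel_left _ (by norm_num)]
  have hkz : (k : ℤ) = ∑ j : Fin k, ((((j : ℕ)) : ℤ) + 1) * ((t j : ℕ) : ℤ) := by
    have hcast := congrArg (Nat.cast : ℕ → ℤ) ht2
    push_cast at hcast
    exact hcast.symm
  have hexp : (k : ℤ) +
      ∑ j : Fin k, ((((j : ℕ) : ℤ) + 2) * (((j : ℕ) : ℤ) - 1) / 2) * ((t j : ℕ) : ℤ)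
      = ∑ j : Fin k, (((((j : ℕ) + 2).choose 2 : ℕ) : ℤ) - 1) * ((t j : ℕ) : ℤ) := by
    rw [hkz, ← Finset.sum_add_distrib]
    apply Finset.sum_congr rfl
    intro j _
    rw [hej j]
    ring
  have hsign : (-1 : ℝ) ^ ((k : ℤ) +
      ∑ j : Fin k, ((((j : ℕ) : ℤ) + 2) * (((j : ℕ) : ℤ) - 1) / 2) * ((t j : ℕ) : ℤ))
      = ∏ j : Fin k, ((-1 : ℝ) ^ ((((j : ℕ) + 2).choose 2) + 1)) ^ (t j : ℕ) := by
    rw [hexp, ← prod_zpow _ _ (by norm_num : (-1 : ℝ) ≠ 0)]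
    apply Finset.prod_congr rfl
    intro j _
    rw [zpow_mul, zpow_natCast]
    congr 1
    rw [zpow_sub₀ (by norm_num : (-1 : ℝ) ≠ 0), zpow_natCast, zpow_one, pow_succ]
    field_simp
  -- (b) split the product
  have hb : ∏ j : Fin k, (c ((j : ℕ) + 1)) ^ (t j : ℕ)
      = (∏ j : Fin k, ((-1 : ℝ) ^ ((((j : ℕ) + 2).choose 2) + 1)) ^ (t j : ℕ)) *
        ∏ j : Fin k, (fibonomial (n + 1) ((j : ℕ) + 1)) ^ (t j : ℕ) := by
    rw [← Finset.prod_mul_distrib]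
    apply Finset.prod_congr rfl
    intro j _
    rw [hc]
    dsimp only
    rw [mul_pow]
  rw [ha, hb, hsign]
  ring
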